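/- For every deterministic online algorithm A for OOEBP (on instances with item sizes in (0,1]) and every real q < 2, there exists an instance I such that cost_A(I) > q·OPT(I). That is, the absolute competitive ratio of any online algorithm for OOEBP with 1-items is at least 2. -/

import Mathlib

open scoped BigOperators Classical

namespace OOEBP

noncomputable section

/-- Load of bin `b` under packing `p` of instance `s`. -/
def binLoad (s : List ℝ) (p : ℕ → ℕ) (b : ℕ) : ℝ :=
  ∑ j ∈ Finset.range s.length, if p j = b then s.getD j 0 else 0

/-- A packing is feasible if each item is placed into a bin whose current
load (total size of earlier items in the same bin) is strictly below 1. -/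
def Feasible (s : List ℝ) (p : ℕ → ℕ) : Prop :=
  ∀ i < s.length,
    (∑ j ∈ Finset.range i, if p j = p i then s.getD j 0 else 0) < 1

/-- The cost of a packing: the number of nonempty bins. -/
def cost (s : List ℝ) (p : ℕ → ℕ) : ℕ :=
  ((Finset.range s.length).image p).card

/-- Optimal cost of a feasible packing of `s`. -/
def OPT (s : List ℝ) : ℕ :=
  sInf {m | ∃ p, Feasible s p ∧ cost s p = m}

/-- Item `i` is the exceeding item of its bin: the bin's total size is at
least 1 and `i` is the item of maximum index in its bin. -/
def IsExceeding (s : List ℝ) (p : ℕ → ℕ) (i : ℕ) : Prop :=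
  i < s.length ∧ 1 ≤ binLoad s p (p i) ∧
    ∀ j, i < j → j < s.length → p j ≠ p i

/-- The packing induced by a deterministic online algorithm `A`: item `i`
(0-based) is assigned to bin `A (s₁,…,s_{i+1})`. -/
def onlinePack (A : List ℝ → ℕ) (s : List ℝ) : ℕ → ℕ :=
  fun i => A (s.take (i + 1))

/-- An online algorithm is valid if the induced assignment is a feasible
packing on every instance with sizes in (0,1]. -/
def OnlineValid (A : List ℝ → ℕ) : Prop :=
  ∀ s : List ℝ, (∀ x ∈ s, 0 < x ∧ x ≤ 1) → Feasible s (onlinePack A s)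

/-- The number of bins used by the online algorithm `A` on instance `s`. -/
def onlineCost (A : List ℝ → ℕ) (s : List ℝ) : ℕ :=
  cost s (onlinePack A s)

namespace LB

/-- γ_t = 2^t / 2^k, the small item size of round `t`. -/
def gam (k t : ℕ) : ℝ := 2 ^ t / 2 ^ k

lemma gam_pos (k t : ℕ) : 0 < gam k t := by
  have h1 : (0:ℝ) < 2 ^ t := by positivity
  have h2 : (0:ℝ) < 2 ^ k := by positivity
  exact div_pos h1 h2

lemma gam_le_half {k t : ℕ} (h : t < k) : gam k t ≤ 1/2 := by
  rw [gam, div_le_iff₀ (by positivity)]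
  have h2 : (2:ℝ) ^ (t+1) ≤ 2 ^ k := pow_le_pow_right₀ one_le_two h
  rw [pow_succ] at h2
  linarith

/-- Item sizes: round `u` consists of items `3u` (size `1-γ_u`), `3u+1` (size `γ_u`),
`3u+2` (size 1). -/
def sz (k i : ℕ) : ℝ :=
  if i % 3 = 0 then 1 - gam k (i / 3) else if i % 3 = 1 then gam k (i / 3) else 1

lemma sz0 (k u : ℕ) : sz k (3*u) = 1 - gam k u := by
  have h : (3*u) % 3 = 0 := by omega
  have h2 : (3*u) / 3 = u := by omega
  rw [sz, if_pos h, h2]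

lemma sz1 (k u : ℕ) : sz k (3*u+1) = gam k u := by
  have h : (3*u+1) % 3 = 1 := by omega
  have h2 : (3*u+1) / 3 = u := by omega
  rw [sz, if_neg (by omega), if_pos h, h2]

lemma sz2 (k u : ℕ) : sz k (3*u+2) = 1 := by
  rw [sz, if_neg (by omega), if_neg (by omega)]

lemma sz_pos {k i : ℕ} (h : i < 3*k) : 0 < sz k i := by
  have hd : i / 3 < k := by omega
  have hg := gam_pos k (i/3)
  have hh := gam_le_half hd
  rw [sz]; split_ifs <;> linarith

lemma sz_le_one {k i : ℕ} (h : i < 3*k) : sz k i ≤ 1 := by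
  have hd : i / 3 < k := by omega
  have hg := gam_pos k (i/3)
  have hh := gam_le_half hd
  rw [sz]; split_ifs <;> linarith

/-- The adversarial instance (full list of `3k` items). -/
def L (k : ℕ) : List ℝ := (List.range (3*k)).map (sz k)

lemma length_L (k : ℕ) : (L k).length = 3*k := by simp [L]

lemma getD_L {k j : ℕ} (h : j < 3*k) : (L k).getD j 0 = sz k j := by
  rw [L, List.getD_eq_getElem?_getD, List.getElem?_map, List.getElem?_range h]
  rfl

lemma getD_take {k m j : ℕ} (hj : j < m) (hm : m ≤ 3*k) :
    ((L k).take m).getD j 0 = sz k j := by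
  rw [List.getD_eq_getElem?_getD, List.getElem?_take]
  simp only [hj, if_true]
  rw [← List.getD_eq_getElem?_getD, getD_L (by omega)]

lemma length_take {k m : ℕ} (hm : m ≤ 3*k) : ((L k).take m).length = m := by
  rw [List.length_take, length_L]; omega

lemma sum_pow_two (j : ℕ) : ∑ t ∈ Finset.range j, (2:ℝ)^t = 2^j - 1 := by
  induction j with
  | zero => simp
  | succ n ih => rw [Finset.sum_range_succ, ih]; ring

lemma sum_gam (k j : ℕ) : ∑ t ∈ Finset.range j, gam k t = ((2:ℝ)^j - 1)/2^k := by
  simp only [gam, ← Finset.sum_div, sum_pow_two]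

lemma sum_gam_lt_one {k j : ℕ} (h : j ≤ k) : ∑ t ∈ Finset.range j, gam k t < 1 := by
  rw [sum_gam, div_lt_one (by positivity)]
  have h2 : (2:ℝ)^j ≤ 2^k := pow_le_pow_right₀ one_le_two h
  linarith

/-- Optimal-style packing for the prefix of length `3r+2`: items `3j` and `3j+2`
(`j < r`) go to bin `j`; all `γ` items and items `3r`, `3r+1` go to bin `r`. -/
def pstar (r i : ℕ) : ℕ := if i % 3 = 1 ∨ 3*r ≤ i then r else i / 3

end LB

namespace LB

lemma feas_pstar {k r : ℕ} (hr : r < k) :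
    Feasible ((L k).take (3*r+2)) (pstar r) := by
  intro i hi
  rw [length_take (by omega)] at hi
  have hrw : (∑ j ∈ Finset.range i,
      if pstar r j = pstar r i then ((L k).take (3*r+2)).getD j 0 else 0)
      = ∑ j ∈ Finset.range i, (if pstar r j = pstar r i then sz k j else 0) := by
    refine Finset.sum_congr rfl ?_
    intro j hj
    rw [Finset.mem_range] at hj
    by_cases h : pstar r j = pstar r i
    · rw [if_pos h, if_pos h, getD_take (by omega) (by omega)]
    · rw [if_neg h, if_neg h]
  rw [hrw, ← Finset.sum_filter]
  rcases Nat.lt_or_ge i (3*r) with hlt | hge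
  · rcases (show i % 3 = 0 ∨ i % 3 = 1 ∨ i % 3 = 2 by omega) with h0 | h1 | h2
    · -- i < 3r, i % 3 = 0 : bin i/3, no earlier item in it
      have hpi : pstar r i = i / 3 := by rw [pstar, if_neg (by omega)]
      have hfe : Finset.filter (fun j => pstar r j = pstar r i) (Finset.range i) = ∅ := by
        ext j
        simp only [Finset.mem_filter, Finset.mem_range, Finset.notMem_empty, iff_false, not_and]
        intro hj
        rw [hpi, pstar]
        split_ifs with hc
        · omega
        · omega
      rw [hfe]; norm_num
    · -- i < 3r, i % 3 = 1 : stray bin r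
      have hpi : pstar r i = r := by rw [pstar, if_pos (Or.inl h1)]
      have hfe : Finset.filter (fun j => pstar r j = pstar r i) (Finset.range i)
          = (Finset.range (i/3)).image (fun t => 3*t+1) := by
        ext j
        simp only [Finset.mem_filter, Finset.mem_range, Finset.mem_image, hpi]
        constructor
        · rintro ⟨hj, hpj⟩
          rw [pstar] at hpj
          split_ifs at hpj with hc
          · exact ⟨j/3, by omega, by omega⟩
          · omega
        · rintro ⟨t, ht, rfl⟩
          refine ⟨by omega, ?_⟩
          rw [pstar, if_pos (Or.inl (by omega))]
      rw [hfe, Finset.sum_image (by intro a _ b _ h; simp only at h; omega)]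
      calc ∑ t ∈ Finset.range (i/3), sz k (3*t+1)
          = ∑ t ∈ Finset.range (i/3), gam k t :=
            Finset.sum_congr rfl (fun t _ => sz1 k t)
        _ < 1 := sum_gam_lt_one (by omega)
    · -- i < 3r, i % 3 = 2 : bin i/3 contains just item i-2
      have hpi : pstar r i = i / 3 := by rw [pstar, if_neg (by omega)]
      have hfe : Finset.filter (fun j => pstar r j = pstar r i) (Finset.range i)
          = {i - 2} := by
        ext j
        simp only [Finset.mem_filter, Finset.mem_range, Finset.mem_singleton, hpi]
        constructor
        · rintro ⟨hj, hpj⟩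
          rw [pstar] at hpj
          split_ifs at hpj with hc
          · omega
          · omega
        · rintro rfl
          refine ⟨by omega, ?_⟩
          rw [pstar, if_neg (by omega)]
          omega
      rw [hfe, Finset.sum_singleton]
      have h3 : i - 2 = 3*(i/3) := by omega
      rw [h3, sz0]
      have := gam_pos k (i/3); linarith
  · -- 3r ≤ i : i = 3r or i = 3r+1, bin r
    have hpi : pstar r i = r := by rw [pstar, if_pos (Or.inr hge)]
    rcases (show i = 3*r ∨ i = 3*r+1 by omega) with h3r | h3r
    · subst h3r
      have hfe : Finset.filter (fun j => pstar r j = pstar r (3*r)) (Finset.range (3*r))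
          = (Finset.range r).image (fun t => 3*t+1) := by
        ext j
        simp only [Finset.mem_filter, Finset.mem_range, Finset.mem_image, hpi]
        constructor
        · rintro ⟨hj, hpj⟩
          rw [pstar] at hpj
          split_ifs at hpj with hc
          · exact ⟨j/3, by omega, by omega⟩
          · omega
        · rintro ⟨t, ht, rfl⟩
          refine ⟨by omega, ?_⟩
          rw [pstar, if_pos (Or.inl (by omega))]
      rw [hfe, Finset.sum_image (by intro a _ b _ h; simp only at h; omega)]
      calc ∑ t ∈ Finset.range r, sz k (3*t+1)
          = ∑ t ∈ Finset.range r, gam k t :=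
            Finset.sum_congr rfl (fun t _ => sz1 k t)
        _ < 1 := sum_gam_lt_one (by omega)
    · subst h3r
      have hfe : Finset.filter (fun j => pstar r j = pstar r (3*r+1)) (Finset.range (3*r+1))
          = insert (3*r) ((Finset.range r).image (fun t => 3*t+1)) := by
        ext j
        simp only [Finset.mem_filter, Finset.mem_range, Finset.mem_insert, Finset.mem_image, hpi]
        constructor
        · rintro ⟨hj, hpj⟩
          rw [pstar] at hpj
          split_ifs at hpj with hc
          · rcases hc with hc | hc
            · exact Or.inr ⟨j/3, by omega, by omega⟩
            · exact Or.inl (by omega)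
          · omega
        · rintro (rfl | ⟨t, ht, rfl⟩)
          · exact ⟨by omega, by rw [pstar, if_pos (Or.inr (le_refl _))]⟩
          · exact ⟨by omega, by rw [pstar, if_pos (Or.inl (by omega))]⟩
      rw [hfe, Finset.sum_insert (by
        simp only [Finset.mem_image, Finset.mem_range, not_exists]
        intro t _
        omega)]
      rw [Finset.sum_image (by intro a _ b _ h; simp only at h; omega)]
      have hs : ∑ t ∈ Finset.range r, sz k (3*t+1) = ((2:ℝ)^r - 1)/2^k := by
        rw [Finset.sum_congr rfl (fun t _ => sz1 k t), sum_gam]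
      rw [hs, sz0, gam]
      have h1 : (0:ℝ) < 2^k := by positivity
      have h2 : (0:ℝ) < 2^r := by positivity
      have key : (1 - 2^r/2^k) + ((2:ℝ)^r - 1)/2^k = 1 - 1/2^k := by
        field_simp
        ring
      rw [key]
      have : (0:ℝ) < 1/2^k := by positivity
      linarith

lemma opt_ub {k r : ℕ} (hr : r < k) : OPT ((L k).take (3*r+2)) ≤ r + 1 := by
  have h1 : OPT ((L k).take (3*r+2)) ≤ cost ((L k).take (3*r+2)) (pstar r) :=
    Nat.sInf_le ⟨pstar r, feas_pstar hr, rfl⟩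
  refine h1.trans ?_
  rw [cost, length_take (by omega)]
  calc ((Finset.range (3*r+2)).image (pstar r)).card
      ≤ (Finset.range (r+1)).card := by
        apply Finset.card_le_card
        intro b hb
        simp only [Finset.mem_image, Finset.mem_range] at hb ⊢
        obtain ⟨j, hj, rfl⟩ := hb
        rw [pstar]
        split_ifs
        · omega
        · omega
    _ = r + 1 := Finset.card_range _

end LB

namespace LB

/-- The online algorithm's bin for item `j` (on any prefix instance of `L k`
containing item `j`). -/
def P (A : List ℝ → ℕ) (k j : ℕ) : ℕ := A ((L k).take (j+1))

lemma online_eq {A : List ℝ → ℕ} {k r j : ℕ} (hj : j < 3*r+2) :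
    onlinePack A ((L k).take (3*r+2)) j = P A k j := by
  rw [onlinePack, P, List.take_take, Nat.min_eq_left (by omega)]

lemma sizes_ok {k r : ℕ} (hr : r < k) : ∀ x ∈ (L k).take (3*r+2), 0 < x ∧ x ≤ 1 := by
  intro x hx
  have hx' : x ∈ L k := (((L k).take_sublist (3*r+2)).subset) hx
  rw [L, List.mem_map] at hx'
  obtain ⟨i, hi, rfl⟩ := hx'
  rw [List.mem_range] at hi
  exact ⟨sz_pos hi, sz_le_one hi⟩

lemma hFP {A : List ℝ → ℕ} (hA : OnlineValid A) {k r : ℕ} (hr : r < k) :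
    ∀ i < 3*r+2, (∑ j ∈ Finset.range i, if P A k j = P A k i then sz k j else 0) < 1 := by
  intro i hi
  have hfe := hA ((L k).take (3*r+2)) (sizes_ok hr) i (by rw [length_take (by omega)]; omega)
  have hrw : (∑ j ∈ Finset.range i,
      if onlinePack A ((L k).take (3*r+2)) j = onlinePack A ((L k).take (3*r+2)) i
        then ((L k).take (3*r+2)).getD j 0 else 0)
      = ∑ j ∈ Finset.range i, (if P A k j = P A k i then sz k j else 0) := by
    refine Finset.sum_congr rfl ?_
    intro j hj
    rw [Finset.mem_range] at hj
    rw [online_eq (by omega), online_eq (by omega), getD_take (by omega) (by omega)]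
  rw [hrw] at hfe
  exact hfe

lemma closed2 {A : List ℝ → ℕ} (hA : OnlineValid A) {k r j₁ j₂ i : ℕ} (hr : r < k)
    (h1 : j₁ < j₂) (h2 : j₂ < i) (h3 : i < 3*r+2)
    (e1 : P A k j₁ = P A k i) (e2 : P A k j₂ = P A k i)
    (hs : 1 ≤ sz k j₁ + sz k j₂) : False := by
  have h := hFP hA hr i h3
  have hsub : ({j₁, j₂} : Finset ℕ) ⊆ Finset.range i := by
    intro x hx
    simp only [Finset.mem_insert, Finset.mem_singleton] at hx
    rcases hx with rfl | rfl <;> simp only [Finset.mem_range] <;> omega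
  have hb : sz k j₁ + sz k j₂
      ≤ ∑ j ∈ Finset.range i, (if P A k j = P A k i then sz k j else 0) := by
    calc sz k j₁ + sz k j₂
        = ∑ j ∈ ({j₁, j₂} : Finset ℕ), (if P A k j = P A k i then sz k j else 0) := by
          rw [Finset.sum_pair (by omega), if_pos e1, if_pos e2]
      _ ≤ _ := by
          apply Finset.sum_le_sum_of_subset_of_nonneg hsub
          intro j hj _
          rw [Finset.mem_range] at hj
          split_ifs
          · exact le_of_lt (sz_pos (by omega))
          · exact le_refl 0
  linarith

lemma closed1 {A : List ℝ → ℕ} (hA : OnlineValid A) {k r j₁ i : ℕ} (hr : r < k)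
    (h2 : j₁ < i) (h3 : i < 3*r+2)
    (e1 : P A k j₁ = P A k i) (hs : 1 ≤ sz k j₁) : False := by
  have h := hFP hA hr i h3
  have hsub : ({j₁} : Finset ℕ) ⊆ Finset.range i := by
    intro x hx
    simp only [Finset.mem_singleton] at hx
    subst hx
    simp only [Finset.mem_range]
    omega
  have hb : sz k j₁
      ≤ ∑ j ∈ Finset.range i, (if P A k j = P A k i then sz k j else 0) := by
    calc sz k j₁
        = ∑ j ∈ ({j₁} : Finset ℕ), (if P A k j = P A k i then sz k j else 0) := by
          rw [Finset.sum_singleton, if_pos e1]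
      _ ≤ _ := by
          apply Finset.sum_le_sum_of_subset_of_nonneg hsub
          intro j hj _
          rw [Finset.mem_range] at hj
          split_ifs
          · exact le_of_lt (sz_pos (by omega))
          · exact le_refl 0
  linarith

/-- Index of the `t`-th "witness" item: items `3(t/2)` for even `t`,
items `3(t/2)+2` for odd `t`. -/
def idx (t : ℕ) : ℕ := if t % 2 = 0 then 3*(t/2) else 3*(t/2)+2

lemma key_inj {A : List ℝ → ℕ} (hA : OnlineValid A) {k r : ℕ} (hr : r < k)
    (hfol : ∀ j < r, P A k (3*j+1) = P A k (3*j)) :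
    ∀ a b, a < b → b < 2*r+1 → P A k (idx a) ≠ P A k (idx b) := by
  intro a b hab hb heq
  rcases (show (∃ u, a = 2*u ∧ u < r) ∨ (∃ u, a = 2*u+1 ∧ u < r) by
    rcases Nat.even_or_odd a with ⟨u, hu⟩ | ⟨u, hu⟩
    · exact Or.inl ⟨u, by omega, by omega⟩
    · exact Or.inr ⟨u, by omega, by omega⟩) with ⟨u, rfl, hur⟩ | ⟨u, rfl, hur⟩
  · -- a = 2u even: bin of items 3u, 3u+1 (closed with total 1)
    have hia : idx (2*u) = 3*u := by
      rw [idx, if_pos (by omega)]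
      omega
    have hib1 : 3*u+1 < idx b := by
      rw [idx]; split_ifs <;> omega
    have hib2 : idx b < 3*r+2 := by
      rw [idx]; split_ifs <;> omega
    rw [hia] at heq
    refine closed2 hA hr (show 3*u < 3*u+1 by omega) hib1 hib2 heq
      ((hfol u hur).trans heq) ?_
    rw [sz0, sz1]
    linarith
  · -- a = 2u+1 odd: bin of item 3u+2 (the 1-item)
    have hia : idx (2*u+1) = 3*u+2 := by
      rw [idx, if_neg (by omega)]
      omega
    have hib1 : 3*u+2 < idx b := by
      rw [idx]; split_ifs <;> omega
    have hib2 : idx b < 3*r+2 := by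
      rw [idx]; split_ifs <;> omega
    rw [hia] at heq
    exact closed1 hA hr hib1 hib2 heq (by rw [sz2])

lemma cost_lb {A : List ℝ → ℕ} (hA : OnlineValid A) {k r : ℕ} (hr : r < k)
    (hfol : ∀ j < r, P A k (3*j+1) = P A k (3*j)) :
    2*r+1 ≤ onlineCost A ((L k).take (3*r+2)) := by
  rw [onlineCost, cost, length_take (by omega)]
  have hinj : Set.InjOn (fun t => P A k (idx t)) (Finset.range (2*r+1)) := by
    intro a ha b hb hab2
    by_contra hne
    simp only [Finset.coe_range, Set.mem_Iio] at ha hb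
    rcases Nat.lt_or_gt_of_ne hne with h | h
    · exact key_inj hA hr hfol a b h hb hab2
    · exact key_inj hA hr hfol b a h ha hab2.symm
  have hcard : ((Finset.range (2*r+1)).image (fun t => P A k (idx t))).card = 2*r+1 := by
    rw [Finset.card_image_of_injOn hinj, Finset.card_range]
  rw [← hcard]
  apply Finset.card_le_card
  intro x hx
  simp only [Finset.mem_image, Finset.mem_range] at hx ⊢
  obtain ⟨t, ht, rfl⟩ := hx
  have hidx : idx t < 3*r+2 := by rw [idx]; split_ifs <;> omega
  exact ⟨idx t, hidx, online_eq hidx⟩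

lemma cost_lb2 {A : List ℝ → ℕ} (hA : OnlineValid A) {k r : ℕ} (hr : r < k)
    (hfol : ∀ j < r, P A k (3*j+1) = P A k (3*j))
    (hdev : P A k (3*r+1) ≠ P A k (3*r)) :
    2*r+2 ≤ onlineCost A ((L k).take (3*r+2)) := by
  rw [onlineCost, cost, length_take (by omega)]
  have hinj : Set.InjOn (fun t => P A k (idx t)) (Finset.range (2*r+1)) := by
    intro a ha b hb hab2
    by_contra hne
    simp only [Finset.coe_range, Set.mem_Iio] at ha hb
    rcases Nat.lt_or_gt_of_ne hne with h | h
    · exact key_inj hA hr hfol a b h hb hab2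
    · exact key_inj hA hr hfol b a h ha hab2.symm
  have hnm : P A k (3*r+1) ∉ (Finset.range (2*r+1)).image (fun t => P A k (idx t)) := by
    simp only [Finset.mem_image, Finset.mem_range, not_exists, not_and]
    intro t ht heq
    rcases (show (∃ u, t = 2*u ∧ u < r) ∨ (∃ u, t = 2*u+1 ∧ u < r) ∨ t = 2*r by
      rcases Nat.even_or_odd t with ⟨u, hu⟩ | ⟨u, hu⟩
      · rcases Nat.lt_or_ge u r with h | h
        · exact Or.inl ⟨u, by omega, h⟩
        · exact Or.inr (Or.inr (by omega))
      · exact Or.inr (Or.inl ⟨u, by omega, by omega⟩)) with ⟨u, rfl, hur⟩ | ⟨u, rfl, hur⟩ | rfl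
    · have hia : idx (2*u) = 3*u := by rw [idx, if_pos (by omega)]; omega
      rw [hia] at heq
      exact closed2 hA hr (show 3*u < 3*u+1 by omega) (by omega) (by omega) heq
        ((hfol u hur).trans heq) (by rw [sz0, sz1]; linarith)
    · have hia : idx (2*u+1) = 3*u+2 := by rw [idx, if_neg (by omega)]; omega
      rw [hia] at heq
      exact closed1 hA hr (by omega) (by omega) heq (by rw [sz2])
    · have hia : idx (2*r) = 3*r := by rw [idx, if_pos (by omega)]; omega
      rw [hia] at heq
      exact hdev heq.symm
  have hcard : (insert (P A k (3*r+1))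
      ((Finset.range (2*r+1)).image (fun t => P A k (idx t)))).card = 2*r+2 := by
    rw [Finset.card_insert_of_notMem hnm, Finset.card_image_of_injOn hinj, Finset.card_range]
  rw [← hcard]
  apply Finset.card_le_card
  intro x hx
  rw [Finset.mem_insert] at hx
  simp only [Finset.mem_image, Finset.mem_range] at hx ⊢
  rcases hx with rfl | ⟨t, ht, rfl⟩
  · exact ⟨3*r+1, by omega, online_eq (by omega)⟩
  · have hidx : idx t < 3*r+2 := by rw [idx]; split_ifs <;> omega
    exact ⟨idx t, hidx, online_eq hidx⟩

end LB


/-- no online algorithm for OOEBP (with 1-items) has absolute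
competitive ratio below 2. -/
theorem stmt4 (A : List ℝ → ℕ) (hA : OnlineValid A) (q : ℝ) (hq : q < 2) :
    ∃ s : List ℝ, (∀ x ∈ s, 0 < x ∧ x ≤ 1) ∧
      (onlineCost A s : ℝ) > q * OPT s := by
  classical
  set q' : ℝ := max q 0 with hq'def
  have hq'0 : 0 ≤ q' := le_max_right _ _
  have hq'2 : q' < 2 := max_lt hq (by norm_num)
  have hqq' : q ≤ q' := le_max_left _ _
  suffices h : ∃ s : List ℝ, (∀ x ∈ s, 0 < x ∧ x ≤ 1) ∧
      (onlineCost A s : ℝ) > q' * OPT s by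
    obtain ⟨s, h1, h2⟩ := h
    refine ⟨s, h1, lt_of_le_of_lt ?_ h2⟩
    exact mul_le_mul_of_nonneg_right hqq' (Nat.cast_nonneg _)
  obtain ⟨n, hn⟩ := exists_nat_gt (1/(2 - q'))
  set k := n + 1 with hkdef
  have h2q : (0:ℝ) < 2 - q' := by linarith
  have hk1 : 1 < (2 - q') * k := by
    have hnk : (n:ℝ) ≤ k := by exact_mod_cast Nat.le_succ n
    have h1 : 1/(2-q') < (k:ℝ) := by linarith
    calc (1:ℝ) = (2-q') * (1/(2-q')) := by field_simp
      _ < (2-q') * k := by exact mul_lt_mul_of_pos_left h1 h2q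
  by_cases hdev : ∃ j, j < k ∧ LB.P A k (3*j+1) ≠ LB.P A k (3*j)
  · -- first deviation round r : stop right after it
    set r := Nat.find hdev with hrdef
    obtain ⟨hrk, hrd⟩ := Nat.find_spec hdev
    have hfol : ∀ j < r, LB.P A k (3*j+1) = LB.P A k (3*j) := by
      intro j hj
      have := Nat.find_min hdev hj
      push_neg at this
      exact this (by omega)
    refine ⟨(LB.L k).take (3*r+2), LB.sizes_ok hrk, ?_⟩
    have hc := LB.cost_lb2 hA hrk hfol hrd
    have ho := LB.opt_ub (k := k) (r := r) hrk
    have h1 : (2*(r:ℝ)+2) ≤ (onlineCost A ((LB.L k).take (3*r+2)) : ℝ) := by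
      have : ((2*r+2 : ℕ) : ℝ) ≤ (onlineCost A ((LB.L k).take (3*r+2)) : ℝ) := by
        exact_mod_cast hc
      push_cast at this
      linarith
    have h2 : q' * (OPT ((LB.L k).take (3*r+2)) : ℝ) ≤ q' * ((r:ℝ)+1) := by
      apply mul_le_mul_of_nonneg_left _ hq'0
      have : ((OPT ((LB.L k).take (3*r+2)) : ℕ) : ℝ) ≤ ((r+1 : ℕ) : ℝ) := by
        exact_mod_cast ho
      push_cast at this
      linarith
    have h3 : q' * ((r:ℝ)+1) < 2*(r:ℝ)+2 := by nlinarith [Nat.cast_nonneg (α := ℝ) r]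
    linarith
  · -- no deviation : the algorithm pays 2 bins per round throughout
    push_neg at hdev
    set r := k - 1 with hrdef
    have hrk : r < k := by omega
    have hfol : ∀ j < r, LB.P A k (3*j+1) = LB.P A k (3*j) := fun j hj => hdev j (by omega)
    refine ⟨(LB.L k).take (3*r+2), LB.sizes_ok hrk, ?_⟩
    have hc := LB.cost_lb hA hrk hfol
    have ho := LB.opt_ub (k := k) (r := r) hrk
    have h1 : (2*(r:ℝ)+1) ≤ (onlineCost A ((LB.L k).take (3*r+2)) : ℝ) := by
      have : ((2*r+1 : ℕ) : ℝ) ≤ (onlineCost A ((LB.L k).take (3*r+2)) : ℝ) := by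
        exact_mod_cast hc
      push_cast at this
      linarith
    have h2 : q' * (OPT ((LB.L k).take (3*r+2)) : ℝ) ≤ q' * ((r:ℝ)+1) := by
      apply mul_le_mul_of_nonneg_left _ hq'0
      have : ((OPT ((LB.L k).take (3*r+2)) : ℕ) : ℝ) ≤ ((r+1 : ℕ) : ℝ) := by
        exact_mod_cast ho
      push_cast at this
      linarith
    have hrk' : ((r:ℝ)+1) = (k:ℝ) := by
      have : r + 1 = k := by omega
      exact_mod_cast this
    have h3 : q' * ((r:ℝ)+1) < 2*(r:ℝ)+1 := by
      rw [hrk']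
      have h4 : 2*(r:ℝ)+1 = 2*(k:ℝ) - 1 := by
        rw [← hrk']; ring
      rw [h4]
      nlinarith
    linarith


end

end OOEBP
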